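/- Let P be a finite path in ℤ² of horizontal extent at least W, i.e., max_k x(P_k) − min_k x(P_k) ≥ W, where P starts at its leftmost column and ends at its rightmost column. Then P has at least W visible glues (glues visible from the south): for every half-integer x-coordinate c with min_k x(P_k) < c < max_k x(P_k) and c ∉ ℤ, there is exactly one visible glue of P whose midpoint has x-coordinate c. -/

import Mathlib

/-- The midpoint in ℝ² of positions `P i` and `P (i+1)`: the position of the glue
between consecutive tiles of the path. -/
noncomputable def mid (P : ℕ → ℤ × ℤ) (i : ℕ) : ℝ × ℝ :=
  ((((P i).1 + (P (i + 1)).1 : ℤ) : ℝ) / 2, (((P i).2 + (P (i + 1)).2 : ℤ) : ℝ) / 2)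

/-- The glue at index `i` of a path of length `n` is visible from the south:
the downward vertical ray from its midpoint contains no other glue midpoint of `P`. -/
def Visible (n : ℕ) (P : ℕ → ℤ × ℤ) (i : ℕ) : Prop :=
  i + 1 < n ∧ ∀ j, j + 1 < n → j ≠ i →
    ¬((mid P j).1 = (mid P i).1 ∧ (mid P j).2 ≤ (mid P i).2)

/-- A path in ℤ²: injective positions, consecutive positions at L¹-distance 1. -/
def IsPathPos (n : ℕ) (P : ℕ → ℤ × ℤ) : Prop :=
  (∀ a < n, ∀ b < n, P a = P b → a = b) ∧
  (∀ k, k + 1 < n → |(P (k + 1)).1 - (P k).1| + |(P (k + 1)).2 - (P k).2| = 1)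

lemma midx_eq (P : ℕ → ℤ × ℤ) (i : ℕ) (a : ℤ) :
    (mid P i).1 = (a : ℝ) + 1 / 2 ↔ (P i).1 + (P (i + 1)).1 = 2 * a + 1 := by
  unfold mid
  simp only
  constructor
  · intro h
    have : (((P i).1 + (P (i + 1)).1 : ℤ) : ℝ) = ((2 * a + 1 : ℤ) : ℝ) := by
      push_cast at h ⊢; linarith
    exact_mod_cast this
  · intro h
    have : (((P i).1 + (P (i + 1)).1 : ℤ) : ℝ) = ((2 * a + 1 : ℤ) : ℝ) := by exact_mod_cast h
    push_cast at this ⊢; linarith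

lemma midy_eq (P : ℕ → ℤ × ℤ) (i : ℕ) (h : (P (i + 1)).2 = (P i).2) :
    (mid P i).2 = ((P i).2 : ℝ) := by
  unfold mid
  simp only [h]
  push_cast
  ring

lemma cross_struct {n : ℕ} {P : ℕ → ℤ × ℤ} (hP : IsPathPos n P) {k : ℕ} {a : ℤ}
    (hk : k + 1 < n) (hc : (P k).1 + (P (k + 1)).1 = 2 * a + 1) :
    (P (k + 1)).2 = (P k).2 ∧
      (((P k).1 = a ∧ (P (k + 1)).1 = a + 1) ∨ ((P k).1 = a + 1 ∧ (P (k + 1)).1 = a)) := by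
  have h := hP.2 k hk
  rcases abs_cases ((P (k+1)).1 - (P k).1) with ⟨e1,e2⟩|⟨e1,e2⟩ <;>
    rcases abs_cases ((P (k+1)).2 - (P k).2) with ⟨e3,e4⟩|⟨e3,e4⟩ <;> omega

lemma cross_unique {n : ℕ} {P : ℕ → ℤ × ℤ} (hP : IsPathPos n P) {a : ℤ} {j k : ℕ}
    (hj : j + 1 < n) (hk : k + 1 < n)
    (hcj : (P j).1 + (P (j + 1)).1 = 2 * a + 1)
    (hck : (P k).1 + (P (k + 1)).1 = 2 * a + 1)
    (hy : (P j).2 = (P k).2) : j = k := by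
  obtain ⟨hyj, hxj⟩ := cross_struct hP hj hcj
  obtain ⟨hyk, hxk⟩ := cross_struct hP hk hck
  have inj := hP.1
  rcases hxj with ⟨j1, j2⟩ | ⟨j1, j2⟩ <;> rcases hxk with ⟨k1, k2⟩ | ⟨k1, k2⟩
  · exact inj j (by omega) k (by omega) (Prod.ext_iff.mpr ⟨by omega, hy⟩)
  · have h1 : j + 1 = k := inj (j+1) hj k (by omega) (Prod.ext_iff.mpr ⟨by omega, by omega⟩)
    have h2 : j = k + 1 := inj j (by omega) (k+1) hk (Prod.ext_iff.mpr ⟨by omega, by omega⟩)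
    omega
  · have h1 : j + 1 = k := inj (j+1) hj k (by omega) (Prod.ext_iff.mpr ⟨by omega, by omega⟩)
    have h2 : j = k + 1 := inj j (by omega) (k+1) hk (Prod.ext_iff.mpr ⟨by omega, by omega⟩)
    omega
  · exact inj j (by omega) k (by omega) (Prod.ext_iff.mpr ⟨by omega, hy⟩)

/-- A path of horizontal extent at least `W`, starting at its leftmost column and
ending at its rightmost column, has at least `W` visible glues: every half-integer
x-coordinate strictly between the leftmost and rightmost columns carries exactly one
glue of `P` visible from the south. -/
theorem wide_path_has_visible_glues (n W : ℕ) (P : ℕ → ℤ × ℤ) (minx maxx : ℤ)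
    (hn : 2 ≤ n) (hP : IsPathPos n P)
    (hrange : ∀ k < n, minx ≤ (P k).1 ∧ (P k).1 ≤ maxx)
    (hstart : (P 0).1 = minx) (hend : (P (n - 1)).1 = maxx)
    (hW : (W : ℤ) ≤ maxx - minx) :
    (∀ a : ℤ, minx ≤ a → a < maxx →
      ∃! i, Visible n P i ∧ (mid P i).1 = (a : ℝ) + 1 / 2) ∧
    W ≤ {i | Visible n P i}.ncard := by
  classical
  have hstep := hP.2
  have key : ∀ a : ℤ, minx ≤ a → a < maxx →
      ∃! i, Visible n P i ∧ (mid P i).1 = (a : ℝ) + 1 / 2 := by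
    intro a ha1 ha2
    -- existence of a crossing, by discrete IVT
    have hS : ∃ m, m < n ∧ a + 1 ≤ (P m).1 := by
      refine ⟨n - 1, by omega, ?_⟩
      rw [hend]; omega
    obtain ⟨hm1, hm2⟩ := Nat.find_spec hS
    set m := Nat.find hS with hmdef
    have hm0 : m ≠ 0 := by
      intro h
      rw [h] at hm2
      rw [hstart] at hm2
      omega
    have hprev : ¬(m - 1 < n ∧ a + 1 ≤ (P (m - 1)).1) := Nat.find_min hS (by omega)
    have hprev' : (P (m - 1)).1 ≤ a := by
      by_contra h
      exact hprev ⟨by omega, by omega⟩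
    have hmstep := hstep (m - 1) (by omega)
    rw [show m - 1 + 1 = m by omega] at hmstep
    have hcross : ∃ k, k + 1 < n ∧ (P k).1 + (P (k + 1)).1 = 2 * a + 1 := by
      refine ⟨m - 1, by omega, ?_⟩
      rw [show m - 1 + 1 = m by omega]
      rcases abs_cases ((P m).1 - (P (m-1)).1) with ⟨e1,e2⟩|⟨e1,e2⟩ <;>
        rcases abs_cases ((P m).2 - (P (m-1)).2) with ⟨e3,e4⟩|⟨e3,e4⟩ <;> omega
    -- finset of crossings
    set F := (Finset.range n).filter
      (fun k => k + 1 < n ∧ (P k).1 + (P (k + 1)).1 = 2 * a + 1) with hFdef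
    have hmemF : ∀ k, k ∈ F ↔ k + 1 < n ∧ (P k).1 + (P (k + 1)).1 = 2 * a + 1 := by
      intro k
      simp only [hFdef, Finset.mem_filter, Finset.mem_range]
      constructor
      · rintro ⟨_, h⟩; exact h
      · rintro ⟨h1, h2⟩; exact ⟨by omega, h1, h2⟩
    obtain ⟨k0, hk0⟩ := hcross
    have hFne : F.Nonempty := ⟨k0, (hmemF k0).mpr hk0⟩
    obtain ⟨k, hkF, hkmin⟩ := F.exists_min_image (fun k => (P k).2) hFne
    obtain ⟨hk1, hk2⟩ := (hmemF k).mp hkF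
    have hky := (cross_struct hP hk1 hk2).1
    have hkx : (mid P k).1 = (a : ℝ) + 1 / 2 := (midx_eq P k a).mpr hk2
    have hvis : Visible n P k := by
      refine ⟨hk1, ?_⟩
      rintro j hj hjk ⟨hx, hy⟩
      rw [hkx] at hx
      have hcj := (midx_eq P j a).mp hx
      have hjy := (cross_struct hP hj hcj).1
      have hmin : (P k).2 ≤ (P j).2 := hkmin j ((hmemF j).mpr ⟨hj, hcj⟩)
      rw [midy_eq P j hjy, midy_eq P k hky] at hy
      have hyy : (P j).2 = (P k).2 := by exact_mod_cast le_antisymm (by exact_mod_cast hy) hmin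
      exact hjk (cross_unique hP hj hk1 hcj hk2 hyy)
    refine ⟨k, ⟨hvis, hkx⟩, ?_⟩
    rintro i ⟨hvi, hxi⟩
    by_contra hne
    have hci := (midx_eq P i a).mp hxi
    have hiy := (cross_struct hP hvi.1 hci).1
    have hmin : (P k).2 ≤ (P i).2 := hkmin i ((hmemF i).mpr ⟨hvi.1, hci⟩)
    refine hvi.2 k hk1 (fun h => hne (h ▸ rfl)) ⟨?_, ?_⟩
    · rw [hkx, hxi]
    · rw [midy_eq P k hky, midy_eq P i hiy]
      exact_mod_cast hmin
  refine ⟨key, ?_⟩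
  have hfin : {i | Visible n P i}.Finite :=
    (Set.finite_Iio n).subset (fun i hi => lt_trans (Nat.lt_succ_self i) hi.1)
  set f : ℤ → ℕ := fun a =>
    if h : minx ≤ a ∧ a < maxx then ((key a h.1 h.2).exists).choose else 0 with hfdef
  have hf1 : ∀ a, minx ≤ a → a < maxx →
      Visible n P (f a) ∧ (mid P (f a)).1 = (a : ℝ) + 1 / 2 := by
    intro a h1 h2
    have h : minx ≤ a ∧ a < maxx := ⟨h1, h2⟩
    simp only [hfdef, dif_pos h]
    exact ((key a h.1 h.2).exists).choose_spec
  have hcard : (Finset.Ico minx maxx).card ≤ hfin.toFinset.card := by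
    apply Finset.card_le_card_of_injOn f
    · intro a ha
      rw [Finset.mem_coe, Finset.mem_Ico] at ha
      rw [Finset.mem_coe, Set.Finite.mem_toFinset]
      exact (hf1 a ha.1 ha.2).1
    · intro a ha b hb hab
      rw [Finset.mem_coe, Finset.mem_Ico] at ha hb
      have h1 := (hf1 a ha.1 ha.2).2
      have h2 := (hf1 b hb.1 hb.2).2
      rw [hab, h2] at h1
      have : (b : ℝ) = a := by linarith
      exact_mod_cast this.symm
  have hIco : (Finset.Ico minx maxx).card = (maxx - minx).toNat := Int.card_Ico minx maxx
  rw [← Set.ncard_coe_finset hfin.toFinset, Set.Finite.coe_toFinset] at hcard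
  omega
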